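/- Let n ≥ 1, let K ≥ 1 be a natural number, and let c be a real number with 0 ≤ c ≤ 1/K. Let A_1, …, A_K ∈ ℝ^{n×n} be matrices such that each row of each A_k contains at most one nonzero entry and every entry of each A_k has absolute value at most c. Then μ_∞(−I) + Σ_{k=1}^{K} ‖A_k‖_∞ ≤ 0, where μ_∞(−I) = lim_{δ→0⁺} (‖I + δ·(−I)‖_∞ − 1)/δ = −1 is the logarithmic norm of −I induced by the ∞-operator norm ‖M‖_∞ = max_i Σ_j |m_ij|. (This is the sufficient condition for asymptotic stability of the linear multi-delay system dH/dt = −I·H(t) + Σ_{k=1}^K A_k·H(t_{τ_k}), establishing that the proposed delay differential equation is asymptotically stable when the balance constant satisfies c ≤ 1/K.) -/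

import Mathlib

/-! Stability condition for the STDDE multi-delay system: if 0 ≤ c ≤ 1/K and each of the
matrices A_1, …, A_K has at most one nonzero entry per row with all entries of absolute
value at most c, then μ_∞(−I) + Σ_{k=1}^K ‖A_k‖_∞ ≤ 0, where
μ_∞(−I) = lim_{δ→0⁺} (‖I + δ·(−I)‖_∞ − 1)/δ = −1 is the logarithmic norm of −I induced
by the ∞-operator norm (maximum absolute row sum). -/

attribute [local instance] Matrix.linftyOpNormedAddCommGroup
attribute [local instance] Matrix.linftyOpNormedSpace

theorem stability_condition_of_balance_const_le
    (n K : ℕ) (hn : 1 ≤ n) (hK : 1 ≤ K)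
    (c : ℝ) (hc0 : 0 ≤ c) (hc : c ≤ 1 / K)
    (A : Fin K → Matrix (Fin n) (Fin n) ℝ)
    (hrow : ∀ (k : Fin K) (i : Fin n), ({j : Fin n | A k i j ≠ 0}).Subsingleton)
    (hent : ∀ (k : Fin K) (i j : Fin n), |A k i j| ≤ c) :
    Filter.Tendsto
      (fun δ : ℝ =>
        (‖(1 : Matrix (Fin n) (Fin n) ℝ) + δ • (-(1 : Matrix (Fin n) (Fin n) ℝ))‖ - 1) / δ)
      (nhdsWithin 0 (Set.Ioi 0)) (nhds (-1)) ∧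
    (-1 : ℝ) + ∑ k : Fin K, ‖A k‖ ≤ 0 := by
  haveI : Nonempty (Fin n) := ⟨⟨0, hn⟩⟩
  have hone : ‖(1 : Matrix (Fin n) (Fin n) ℝ)‖ = 1 := by
    rw [← Matrix.diagonal_one, Matrix.linfty_opNorm_diagonal]
    simp [pi_norm_const]
  constructor
  · -- the function equals -1 eventually on (0,∞) near 0
    have hev : ∀ᶠ δ : ℝ in nhdsWithin 0 (Set.Ioi 0),
        (fun δ : ℝ =>
          (‖(1 : Matrix (Fin n) (Fin n) ℝ) + δ • (-(1 : Matrix (Fin n) (Fin n) ℝ))‖ - 1) / δ) δ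
          = (-1 : ℝ) := by
      filter_upwards [Ioo_mem_nhdsGT_of_mem (by norm_num : (0:ℝ) ∈ Set.Ico 0 1)] with δ hδ
      obtain ⟨hδ0, hδ1⟩ := hδ
      have hmat : (1 : Matrix (Fin n) (Fin n) ℝ) + δ • (-(1 : Matrix (Fin n) (Fin n) ℝ))
          = (1 - δ) • (1 : Matrix (Fin n) (Fin n) ℝ) := by
        rw [sub_smul, one_smul]
        module
      rw [hmat, norm_smul, hone, mul_one, Real.norm_eq_abs,
        abs_of_nonneg (by linarith)]
      field_simp
      ring
    refine Filter.Tendsto.congr' (Filter.EventuallyEq.symm hev) tendsto_const_nhds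
  · -- each ‖A k‖ ≤ c
    have hAle : ∀ k : Fin K, ‖A k‖ ≤ c := by
      intro k
      have : ‖A k‖₊ ≤ ⟨c, hc0⟩ := by
        rw [Matrix.linfty_opNNNorm_def]
        refine Finset.sup_le fun i _ => ?_
        by_cases h : ∀ j, A k i j = 0
        · simp [h]
          exact zero_le
        · push_neg at h
          obtain ⟨j₀, hj₀⟩ := h
          have hsum : ∑ j : Fin n, ‖A k i j‖₊ = ‖A k i j₀‖₊ := by
            refine Finset.sum_eq_single j₀ (fun j _ hj => ?_) (by simp)
            by_contra hne
            have hz : A k i j ≠ 0 := by simpa using hne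
            exact hj (hrow k i hz hj₀)
          rw [hsum]
          exact NNReal.coe_le_coe.1 (by rw [coe_nnnorm, Real.norm_eq_abs]; exact hent k i j₀)
      rw [← coe_nnnorm] at *
      exact NNReal.coe_le_coe.2 this
    have hsum : ∑ k : Fin K, ‖A k‖ ≤ (K : ℝ) * c := by
      calc ∑ k : Fin K, ‖A k‖ ≤ ∑ _k : Fin K, c :=
            Finset.sum_le_sum fun k _ => hAle k
        _ = (K : ℝ) * c := by simp [mul_comm]
    have hK0 : (0:ℝ) < K := by exact_mod_cast hK
    have : (K : ℝ) * c ≤ 1 := by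
      calc (K : ℝ) * c ≤ (K : ℝ) * (1 / K) := by
            exact mul_le_mul_of_nonneg_left hc hK0.le
        _ = 1 := by field_simp
    linarith
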